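/- Let T > 0, let d_D, d_T, r_R ≥ 0, and let u : [0,T] → [0,1] be measurable. If x = (s, r) is a trajectory of the controlled Lotka–Volterra system with x(0) ∈ Δ, then x(τ) ∈ Δ for every τ ∈ [0,T]. -/

import Mathlib

open MeasureTheory Set intervalIntegral


/-- The simplex `Δ = {(x₁,x₂) : x₁ ≥ 0, x₂ ≥ 0, x₁ + x₂ ≤ 1}`. -/
def simplexΔ : Set (ℝ × ℝ) := {p : ℝ × ℝ | 0 ≤ p.1 ∧ 0 ≤ p.2 ∧ p.1 + p.2 ≤ 1}

/-- Integral-form Grönwall-type nonnegativity lemma: if `f` is continuous on `[a,b]`,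
satisfies `f τ = f a + ∫_a^τ g`, `f a ≥ 0`, and `g σ ≥ M * f σ` whenever `f σ ≤ 0`,
then `f ≥ 0` on `[a,b]`. -/
lemma nonneg_of_integral_form {a b M : ℝ} (hab : a ≤ b) (hM : 0 ≤ M)
    {f g : ℝ → ℝ} (hf : ContinuousOn f (Icc a b))
    (hg : IntervalIntegrable g volume a b)
    (heq : ∀ τ ∈ Icc a b, f τ = f a + ∫ σ in a..τ, g σ)
    (hge : ∀ σ ∈ Icc a b, f σ ≤ 0 → M * f σ ≤ g σ)
    (h0 : 0 ≤ f a) :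
    ∀ τ ∈ Icc a b, 0 ≤ f τ := by
  by_contra hcon
  push_neg at hcon
  obtain ⟨τ₀, hτ₀, hfτ₀⟩ := hcon
  -- the set of points up to τ₀ where f is nonnegative
  set K : Set ℝ := {t | t ∈ Icc a τ₀ ∧ 0 ≤ f t} with hK
  have hsub : Icc a τ₀ ⊆ Icc a b := Icc_subset_Icc le_rfl hτ₀.2
  have hKne : K.Nonempty := ⟨a, ⟨le_rfl, hτ₀.1⟩, h0⟩
  have hKbdd : BddAbove K := ⟨τ₀, fun t ht => ht.1.2⟩
  have hKclosed : IsClosed K := by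
    have : K = Icc a τ₀ ∩ f ⁻¹' Ici 0 := by
      ext t
      simp only [hK, mem_setOf_eq, mem_inter_iff, mem_preimage, mem_Ici]
    rw [this]
    exact (hf.mono hsub).preimage_isClosed_of_isClosed isClosed_Icc isClosed_Ici
  set t₁ := sSup K with ht₁def
  have ht₁K : t₁ ∈ K := hKclosed.csSup_mem hKne hKbdd
  have ht₁τ₀ : t₁ ≤ τ₀ := ht₁K.1.2
  have ht₁a : a ≤ t₁ := ht₁K.1.1
  have ht₁b : t₁ ∈ Icc a b := ⟨ht₁a, ht₁τ₀.trans hτ₀.2⟩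
  have hfneg : ∀ t ∈ Ioc t₁ τ₀, f t < 0 := by
    intro t ht
    by_contra h
    push_neg at h
    have : t ∈ K := ⟨⟨ht₁a.trans ht.1.le, ht.2⟩, h⟩
    exact absurd (le_csSup hKbdd this) (not_le.mpr ht.1)
  have ht₁lt : t₁ < τ₀ := lt_of_le_of_ne ht₁τ₀ (by
    intro h; rw [h] at ht₁K; linarith [ht₁K.2])
  -- f t₁ = 0
  have hft₁ : f t₁ = 0 := by
    refine le_antisymm ?_ ht₁K.2
    have htend : Filter.Tendsto f (nhdsWithin t₁ (Ioc t₁ τ₀)) (nhds (f t₁)) :=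
      ((hf t₁ ht₁b).mono (Ioc_subset_Icc_self.trans (Icc_subset_Icc ht₁a (hτ₀.2)))).tendsto
    have : ∀ᶠ x in nhdsWithin t₁ (Ioc t₁ τ₀), f x ≤ 0 :=
      eventually_nhdsWithin_of_forall (fun x hx => (hfneg x hx).le)
    have hNB : (nhdsWithin t₁ (Ioc t₁ τ₀)).NeBot := left_nhdsWithin_Ioc_neBot ht₁lt
    exact le_of_tendsto htend this
  -- f ≤ 0 on [t₁, τ₀]
  have hfle : ∀ σ ∈ Icc t₁ τ₀, f σ ≤ 0 := by
    intro σ hσ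
    rcases eq_or_lt_of_le hσ.1 with h | h
    · rw [← h, hft₁]
    · exact (hfneg σ ⟨h, hσ.2⟩).le
  have hmemb : ∀ σ ∈ Icc t₁ τ₀, σ ∈ Icc a b :=
    fun σ hσ => ⟨ht₁a.trans hσ.1, hσ.2.trans hτ₀.2⟩
  -- integrability of g on subintervals
  have hgsub : ∀ c d, c ∈ Icc a b → d ∈ Icc a b → IntervalIntegrable g volume c d := by
    intro c d hc hd
    exact hg.mono_set (uIcc_subset_uIcc (by rw [uIcc_of_le hab]; exact hc)
      (by rw [uIcc_of_le hab]; exact hd))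
  -- f τ = ∫_{t₁}^τ g on [t₁, τ₀]
  have hfint : ∀ τ ∈ Icc t₁ τ₀, f τ = ∫ σ in t₁..τ, g σ := by
    intro τ hτ
    have h1 := heq τ (hmemb τ hτ)
    have h2 := heq t₁ ht₁b
    have h3 : (∫ σ in a..τ, g σ) - ∫ σ in a..t₁, g σ = ∫ σ in t₁..τ, g σ :=
      integral_interval_sub_left (hgsub a τ ⟨le_rfl, hab⟩ (hmemb τ hτ))
        (hgsub a t₁ ⟨le_rfl, hab⟩ ht₁b)
    have : f τ - f t₁ = ∫ σ in t₁..τ, g σ := by rw [h1, h2, ← h3]; ring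
    rw [hft₁] at this; linarith
  -- the primitive Ψ of -f
  set Ψ : ℝ → ℝ := fun τ => ∫ σ in t₁..τ, -f σ with hΨdef
  have hfc : ContinuousOn f (Icc t₁ τ₀) := hf.mono (fun σ hσ => hmemb σ hσ)
  have hfint' : IntervalIntegrable (fun σ => -f σ) volume t₁ τ₀ := by
    apply ContinuousOn.intervalIntegrable
    rw [uIcc_of_le ht₁τ₀]
    exact hfc.neg
  -- key inequality : -f τ ≤ M * Ψ τ
  have hkey : ∀ τ ∈ Icc t₁ τ₀, -f τ ≤ M * Ψ τ := by
    intro τ hτ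
    have h1 : f τ = ∫ σ in t₁..τ, g σ := hfint τ hτ
    have h2 : (∫ σ in t₁..τ, (-g σ)) ≤ ∫ σ in t₁..τ, M * (-f σ) := by
      apply integral_mono_on hτ.1
      · exact ((hgsub t₁ τ ht₁b (hmemb τ hτ)).neg)
      · apply ContinuousOn.intervalIntegrable
        rw [uIcc_of_le hτ.1]
        exact (continuousOn_const.mul (hfc.mono (Icc_subset_Icc le_rfl hτ.2)).neg)
      · intro σ hσ
        have hσ' : σ ∈ Icc t₁ τ₀ := ⟨hσ.1, hσ.2.trans hτ.2⟩
        have := hge σ (hmemb σ hσ') (hfle σ hσ')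
        linarith
    rw [intervalIntegral.integral_neg, intervalIntegral.integral_const_mul] at h2
    rw [h1, show Ψ τ = ∫ σ in t₁..τ, -f σ from rfl]
    linarith [h2]
  -- Ψ nonneg
  have hΨnonneg : ∀ τ ∈ Icc t₁ τ₀, 0 ≤ Ψ τ := by
    intro τ hτ
    apply integral_nonneg hτ.1
    intro σ hσ
    have : f σ ≤ 0 := hfle σ ⟨hσ.1, hσ.2.trans hτ.2⟩
    linarith
  -- Ψ continuous
  have hΨcont : ContinuousOn Ψ (Icc t₁ τ₀) := by
    have := continuousOn_primitive_interval' hfint' (left_mem_uIcc)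
    rwa [uIcc_of_le ht₁τ₀] at this
  -- Ψ has right derivative -f
  have hΨderiv : ∀ x ∈ Ico t₁ τ₀, HasDerivWithinAt Ψ (-f x) (Ici x) x := by
    intro x hx
    have hxb : x ∈ Icc a b := hmemb x ⟨hx.1, hx.2.le⟩
    have hxlt : x < b := lt_of_lt_of_le hx.2 hτ₀.2
    have hmem : Icc a b ∈ nhdsWithin x (Ioi x) := by
      rw [mem_nhdsWithin]
      exact ⟨Iio b, isOpen_Iio, hxlt, fun y hy => ⟨hxb.1.trans hy.2.le, hy.1.le⟩⟩
    apply integral_hasDerivWithinAt_right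
    · exact (hfint'.mono_set (uIcc_subset_uIcc left_mem_uIcc
        (by rw [uIcc_of_le ht₁τ₀]; exact ⟨hx.1, hx.2.le⟩)))
    · exact ⟨Icc a b, hmem, (hf.neg.aestronglyMeasurable measurableSet_Icc)⟩
    · exact ((hf x hxb).mono_of_mem_nhdsWithin hmem).neg
  -- apply Grönwall
  have hgron := norm_le_gronwallBound_of_norm_deriv_right_le hΨcont hΨderiv
    (δ := 0) (K := M) (ε := 0)
    (by simp [hΨdef])
    (by
      intro x hx
      have h1 : -f x ≤ M * Ψ x := hkey x ⟨hx.1, hx.2.le⟩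
      have h2 : 0 ≤ -f x := by linarith [hfle x ⟨hx.1, hx.2.le⟩]
      have h3 : 0 ≤ Ψ x := hΨnonneg x ⟨hx.1, hx.2.le⟩
      rw [Real.norm_eq_abs, Real.norm_eq_abs, abs_of_nonneg h2, abs_of_nonneg h3]
      linarith)
  have := hgron τ₀ ⟨ht₁lt.le, le_rfl⟩
  rw [gronwallBound_ε0_δ0] at this
  have hΨ0 : Ψ τ₀ = 0 := by simpa using this
  have := hkey τ₀ ⟨ht₁lt.le, le_rfl⟩
  rw [hΨ0] at this
  linarith

/-- **Invariance of the simplex Δ** for the controlled Lotka–Volterra system.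
If the absolutely continuous trajectory `x = (s, r)` (written in integral form) starts in `Δ`,
it remains in `Δ` on the whole `[0,T]`. -/
theorem simplex_invariance
    (T d_D d_T r_R : ℝ) (hT : 0 < T) (hdD : 0 ≤ d_D) (hdT : 0 ≤ d_T) (hrR : 0 ≤ r_R)
    (u : ℝ → ℝ) (hu_meas : Measurable u) (hu01 : ∀ τ ∈ Icc (0:ℝ) T, u τ ∈ Icc (0:ℝ) 1)
    (s r : ℝ → ℝ)
    (hs_cont : ContinuousOn s (Icc 0 T)) (hr_cont : ContinuousOn r (Icc 0 T))
    (hs_int : IntervalIntegrable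
      (fun σ => (1 - s σ - r σ) * (1 - d_D * u σ) * s σ - d_T * s σ) volume 0 T)
    (hr_int : IntervalIntegrable
      (fun σ => r_R * (1 - s σ - r σ) * r σ - d_T * r σ) volume 0 T)
    (hs_eq : ∀ τ ∈ Icc (0:ℝ) T, s τ = s 0 +
      ∫ σ in (0:ℝ)..τ, ((1 - s σ - r σ) * (1 - d_D * u σ) * s σ - d_T * s σ))
    (hr_eq : ∀ τ ∈ Icc (0:ℝ) T, r τ = r 0 +
      ∫ σ in (0:ℝ)..τ, (r_R * (1 - s σ - r σ) * r σ - d_T * r σ))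
    (hx0 : (s 0, r 0) ∈ simplexΔ) :
    ∀ τ ∈ Icc (0:ℝ) T, (s τ, r τ) ∈ simplexΔ := by
  simp only [simplexΔ, mem_setOf_eq] at hx0 ⊢
  obtain ⟨hs0, hr0, hsr0⟩ := hx0
  -- bounds on s and r
  obtain ⟨Cs, hCs⟩ := isCompact_Icc.exists_bound_of_continuousOn hs_cont
  obtain ⟨Cr, hCr⟩ := isCompact_Icc.exists_bound_of_continuousOn hr_cont
  set C := max Cs Cr with hCdef
  have h0T : (0:ℝ) ∈ Icc (0:ℝ) T := ⟨le_rfl, hT.le⟩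
  have hC : 0 ≤ C := le_trans (norm_nonneg (s 0)) (le_trans (hCs 0 h0T) (le_max_left _ _))
  have hsC : ∀ σ ∈ Icc (0:ℝ) T, |s σ| ≤ C :=
    fun σ hσ => le_trans (hCs σ hσ) (le_max_left _ _)
  have hrC : ∀ σ ∈ Icc (0:ℝ) T, |r σ| ≤ C :=
    fun σ hσ => le_trans (hCr σ hσ) (le_max_right _ _)
  set M : ℝ := (1 + 2*C)*(1 + d_D) + r_R*(1 + 2*C) + d_T + ((1 + d_D)*C + r_R*C) with hMdef
  have hM : 0 ≤ M := by positivity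
  -- bound on |1 - s - r|
  have hP : ∀ σ ∈ Icc (0:ℝ) T, |1 - s σ - r σ| ≤ 1 + 2*C := by
    intro σ hσ
    have h1 := abs_le.mp (hsC σ hσ)
    have h2 := abs_le.mp (hrC σ hσ)
    rw [abs_le]; constructor <;> linarith
  -- bound on |1 - d_D * u|
  have hQ : ∀ σ ∈ Icc (0:ℝ) T, |1 - d_D * u σ| ≤ 1 + d_D := by
    intro σ hσ
    obtain ⟨hu1, hu2⟩ := hu01 σ hσ
    have h1 : 0 ≤ d_D * u σ := mul_nonneg hdD hu1
    have h2 : d_D * u σ ≤ d_D := mul_le_of_le_one_right hdD hu2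
    rw [abs_le]; constructor <;> linarith
  -- Step 1: s ≥ 0
  have hs_nonneg : ∀ τ ∈ Icc (0:ℝ) T, 0 ≤ s τ := by
    apply nonneg_of_integral_form hT.le hM hs_cont hs_int hs_eq _ hs0
    intro σ hσ hsneg
    have hA : (1 - s σ - r σ) * (1 - d_D * u σ) - d_T ≤ M := by
      have h3 : |(1 - s σ - r σ) * (1 - d_D * u σ)| ≤ (1 + 2*C)*(1 + d_D) := by
        rw [abs_mul]
        exact mul_le_mul (hP σ hσ) (hQ σ hσ) (abs_nonneg _) (by positivity)
      have h4 := le_abs_self ((1 - s σ - r σ) * (1 - d_D * u σ))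
      have h5 : 0 ≤ r_R*(1 + 2*C) := by positivity
      have h6 : 0 ≤ (1 + d_D)*C + r_R*C := by positivity
      rw [hMdef]; linarith
    have := mul_le_mul_of_nonpos_right hA hsneg
    nlinarith [this]
  -- Step 2: r ≥ 0
  have hr_nonneg : ∀ τ ∈ Icc (0:ℝ) T, 0 ≤ r τ := by
    apply nonneg_of_integral_form hT.le hM hr_cont hr_int hr_eq _ hr0
    intro σ hσ hrneg
    have hB : r_R * (1 - s σ - r σ) - d_T ≤ M := by
      have h3 : |r_R * (1 - s σ - r σ)| ≤ r_R * (1 + 2*C) := by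
        rw [abs_mul, abs_of_nonneg hrR]
        exact mul_le_mul_of_nonneg_left (hP σ hσ) hrR
      have h4 := le_abs_self (r_R * (1 - s σ - r σ))
      have h5 : 0 ≤ (1 + 2*C)*(1 + d_D) := by positivity
      have h6 : 0 ≤ (1 + d_D)*C + r_R*C := by positivity
      rw [hMdef]; linarith
    have := mul_le_mul_of_nonpos_right hB hrneg
    nlinarith [this]
  -- Step 3: s + r ≤ 1, via w = 1 - s - r
  have hw_nonneg : ∀ τ ∈ Icc (0:ℝ) T, 0 ≤ 1 - s τ - r τ := by
    have hw_cont : ContinuousOn (fun τ => 1 - s τ - r τ) (Icc 0 T) :=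
      (continuousOn_const.sub hs_cont).sub hr_cont
    have hw_int : IntervalIntegrable
        (fun σ => -(((1 - s σ - r σ) * (1 - d_D * u σ) * s σ - d_T * s σ) +
          (r_R * (1 - s σ - r σ) * r σ - d_T * r σ))) volume 0 T :=
      (hs_int.add hr_int).neg
    apply nonneg_of_integral_form hT.le hM hw_cont hw_int
    · intro τ hτ
      have hsub : uIcc (0:ℝ) τ ⊆ uIcc (0:ℝ) T := by
        rw [uIcc_of_le hτ.1, uIcc_of_le hT.le]
        exact Icc_subset_Icc le_rfl hτ.2
      have h1 := hs_eq τ hτ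
      have h2 := hr_eq τ hτ
      rw [intervalIntegral.integral_neg,
        intervalIntegral.integral_add (hs_int.mono_set hsub) (hr_int.mono_set hsub)]
      linarith
    · intro σ hσ hwneg
      have hD : |(1 - d_D * u σ) * s σ + r_R * r σ| ≤ (1 + d_D)*C + r_R*C := by
        refine le_trans (abs_add_le _ _) ?_
        have h1 : |(1 - d_D * u σ) * s σ| ≤ (1 + d_D)*C := by
          rw [abs_mul]
          exact mul_le_mul (hQ σ hσ) (hsC σ hσ) (abs_nonneg _) (by positivity)
        have h2 : |r_R * r σ| ≤ r_R * C := by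
          rw [abs_mul, abs_of_nonneg hrR]
          exact mul_le_mul_of_nonneg_left (hrC σ hσ) hrR
        linarith
      have hDM : -((1 - d_D * u σ) * s σ + r_R * r σ) ≤ M := by
        have := neg_abs_le ((1 - d_D * u σ) * s σ + r_R * r σ)
        have h5 : 0 ≤ (1 + 2*C)*(1 + d_D) := by positivity
        have h6 : 0 ≤ r_R*(1 + 2*C) := by positivity
        rw [hMdef]; linarith
      have hpos : 0 ≤ d_T * (s σ + r σ) :=
        mul_nonneg hdT (add_nonneg (hs_nonneg σ hσ) (hr_nonneg σ hσ))
      have key : M * (1 - s σ - r σ) ≤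
          (-((1 - d_D * u σ) * s σ + r_R * r σ)) * (1 - s σ - r σ) :=
        mul_le_mul_of_nonpos_right hDM hwneg
      nlinarith [key, hpos]
    · linarith
  intro τ hτ
  exact ⟨hs_nonneg τ hτ, hr_nonneg τ hτ, by linarith [hw_nonneg τ hτ]⟩
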